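/- arXiv:hep-lat/0311005 — 2 statements merged into one kernel-verified Lean document; each statement's English description precedes it below -/
import Mathlib

section
/- For real a with 0 < 2a|η| < 1 (η real), the limit of the continued fraction c₀/(1 − c₁/(1 − c₂/(1 − ···))) with c₀ = a²η² and c_j = a²η²/((1+2(j−1)/N)(1+2j/N)) as N → ∞ equals the continued fraction with all partial numerators a²η², whose value is 2a²η²/(1 + √(1 − 4a²η²)). -/
open Filter

/-- Depth-`ℓ` truncation of the continued fraction `c k / (1 - c (k+1) / (1 - ⋯))`. -/
noncomputable def cfracApprox (c : ℕ → ℝ) : ℕ → ℕ → ℝ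
  | 0, _ => 0
  | ℓ + 1, k => c k / (1 - cfracApprox c ℓ (k + 1))

/-- The partial numerators `c₀ = a²η²`, `c_j = a²η²/((1+2(j−1)/N)(1+2j/N))`. -/
noncomputable def cfCoeff (a η : ℝ) (N : ℕ) (j : ℕ) : ℝ :=
  if j = 0 then a ^ 2 * η ^ 2
  else a ^ 2 * η ^ 2 / ((1 + 2 * ((j : ℝ) - 1) / N) * (1 + 2 * (j : ℝ) / N))

section aux

variable {z : ℝ} {c : ℕ → ℝ}

lemma cf_bounds (hz0 : 0 ≤ z) (hz : z < 1/4)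
    (hc : ∀ j, 0 ≤ c j ∧ c j ≤ z) :
    ∀ ℓ k, 0 ≤ cfracApprox c ℓ k ∧ cfracApprox c ℓ k ≤ 2 * z := by
  intro ℓ
  induction ℓ with
  | zero => intro k; simp only [cfracApprox]; constructor <;> linarith
  | succ ℓ ih =>
    intro k
    have h := ih (k + 1)
    have hdpos : (0:ℝ) < 1 - cfracApprox c ℓ (k + 1) := by linarith
    simp only [cfracApprox]
    constructor
    · exact div_nonneg (hc k).1 hdpos.le
    · calc c k / (1 - cfracApprox c ℓ (k + 1)) ≤ c k / (1/2) := by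
            gcongr
            · exact (hc k).1
            · linarith
          _ = 2 * c k := by ring
          _ ≤ 2 * z := by linarith [(hc k).2]

lemma cf_mono (hz0 : 0 ≤ z) (hz : z < 1/4) (hc : ∀ j, 0 ≤ c j ∧ c j ≤ z) :
    ∀ ℓ k, cfracApprox c ℓ k ≤ cfracApprox c (ℓ + 1) k := by
  intro ℓ
  induction ℓ with
  | zero =>
    intro k
    simp only [cfracApprox, sub_zero, div_one]
    exact (hc k).1
  | succ ℓ ih =>
    intro k
    have e1 : cfracApprox c (ℓ + 1) k = c k / (1 - cfracApprox c ℓ (k + 1)) := rfl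
    have e2 : cfracApprox c (ℓ + 1 + 1) k = c k / (1 - cfracApprox c (ℓ + 1) (k + 1)) := rfl
    rw [e1, e2]
    have h1 := (cf_bounds hz0 hz hc (ℓ + 1) (k + 1)).2
    have h2 := ih (k + 1)
    gcongr
    all_goals first
      | exact (hc k).1
      | linarith

lemma cf_diff (hz0 : 0 ≤ z) (hz : z < 1/4) (hc : ∀ j, 0 ≤ c j ∧ c j ≤ z) :
    ∀ ℓ k, cfracApprox c (ℓ + 1) k - cfracApprox c ℓ k ≤ z * (4 * z) ^ ℓ := by
  intro ℓ
  induction ℓ with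
  | zero =>
    intro k
    simp only [cfracApprox, sub_zero, div_one, pow_zero, mul_one]
    exact (hc k).2
  | succ ℓ ih =>
    intro k
    have hA := cf_bounds hz0 hz hc ℓ (k + 1)
    have hB := cf_bounds hz0 hz hc (ℓ + 1) (k + 1)
    have hAB := cf_mono hz0 hz hc ℓ (k + 1)
    have hd := ih (k + 1)
    set A := cfracApprox c ℓ (k + 1) with hAdef
    set B := cfracApprox c (ℓ + 1) (k + 1) with hBdef
    have hA1 : (0:ℝ) < 1 - A := by linarith [hA.1, hA.2]
    have hB1 : (0:ℝ) < 1 - B := by linarith [hB.1, hB.2]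
    have key : cfracApprox c (ℓ + 2) k - cfracApprox c (ℓ + 1) k
        = c k * (B - A) / ((1 - B) * (1 - A)) := by
      show c k / (1 - B) - c k / (1 - A) = _
      field_simp
      ring
    rw [key]
    have hpos : (0:ℝ) < (1 - B) * (1 - A) := mul_pos hB1 hA1
    rw [div_le_iff₀ hpos]
    have h1 : c k * (B - A) ≤ z * (z * (4 * z) ^ ℓ) :=
      mul_le_mul (hc k).2 hd (sub_nonneg.2 hAB) hz0
    have h2 : (1:ℝ)/4 ≤ (1 - B) * (1 - A) := by nlinarith [hA.2, hB.2]
    have h3 : (0:ℝ) ≤ z * (4 * z) ^ (ℓ + 1) := by positivity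
    have h4 : z * (z * (4 * z) ^ ℓ) = z * (4 * z) ^ (ℓ + 1) * (1/4) := by ring
    linarith [mul_le_mul_of_nonneg_left h2 h3, h1, h4]

lemma cf_tail (hz0 : 0 ≤ z) (hz : z < 1/4) (hc : ∀ j, 0 ≤ c j ∧ c j ≤ z) :
    ∀ ℓ n k, cfracApprox c (ℓ + n) k - cfracApprox c ℓ k ≤ z * (4 * z) ^ ℓ / (1 - 4 * z) := by
  have hq : (0:ℝ) < 1 - 4 * z := by linarith
  intro ℓ n k
  have main : ∀ n, cfracApprox c (ℓ + n) k ≤ cfracApprox c ℓ k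
      + z / (1 - 4 * z) * ((4 * z) ^ ℓ - (4 * z) ^ (ℓ + n)) := by
    intro n
    induction n with
    | zero => simp
    | succ n ih =>
      have hd := cf_diff hz0 hz hc (ℓ + n) k
      have he : z / (1 - 4 * z) * ((4 * z) ^ (ℓ + n) - (4 * z) ^ (ℓ + n + 1))
          = z * (4 * z) ^ (ℓ + n) := by
        rw [div_mul_eq_mul_div, div_eq_iff hq.ne']
        ring
      have hstep : cfracApprox c (ℓ + (n + 1)) k ≤ cfracApprox c (ℓ + n) k + z * (4 * z) ^ (ℓ + n) := by
        rw [show ℓ + (n + 1) = ℓ + n + 1 from rfl]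
        linarith [hd]
      rw [show ℓ + (n + 1) = ℓ + n + 1 from rfl]
      simp only [mul_sub] at ih he ⊢
      linarith [hstep, ih, he]
  have hpow : (0:ℝ) ≤ (4 * z) ^ (ℓ + n) := by positivity
  have := main n
  have hzq : (0:ℝ) ≤ z / (1 - 4 * z) := div_nonneg hz0 hq.le
  have hmm : z / (1 - 4 * z) * ((4 * z) ^ ℓ - (4 * z) ^ (ℓ + n))
      ≤ z / (1 - 4 * z) * (4 * z) ^ ℓ :=
    mul_le_mul_of_nonneg_left (by linarith) hzq
  calc cfracApprox c (ℓ + n) k - cfracApprox c ℓ k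
      ≤ z / (1 - 4 * z) * ((4 * z) ^ ℓ - (4 * z) ^ (ℓ + n)) := by linarith [main n]
    _ ≤ z / (1 - 4 * z) * (4 * z) ^ ℓ := hmm
    _ = z * (4 * z) ^ ℓ / (1 - 4 * z) := by ring

lemma cf_const_shift (z : ℝ) : ∀ ℓ k, cfracApprox (fun _ => z) ℓ k = cfracApprox (fun _ => z) ℓ 0 := by
  intro ℓ
  induction ℓ with
  | zero => intro k; simp [cfracApprox]
  | succ ℓ ih =>
    intro k
    simp only [cfracApprox]
    rw [ih (k + 1), ih 1]

end aux

lemma cfCoeff_bounds (a η : ℝ) (N : ℕ) :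
    ∀ j, 0 ≤ cfCoeff a η N j ∧ cfCoeff a η N j ≤ a ^ 2 * η ^ 2 := by
  intro j
  rcases eq_or_ne j 0 with hj | hj
  · simp only [cfCoeff, hj, if_true]
    exact ⟨by positivity, le_refl _⟩
  · have hj1 : (1 : ℝ) ≤ (j : ℝ) := by exact_mod_cast Nat.one_le_iff_ne_zero.mpr hj
    have hN : (0 : ℝ) ≤ (N : ℝ) := Nat.cast_nonneg N
    have hd1 : (1 : ℝ) ≤ 1 + 2 * ((j : ℝ) - 1) / N := by
      have : (0:ℝ) ≤ 2 * ((j : ℝ) - 1) / N := div_nonneg (by linarith) hN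
      linarith
    have hd2 : (1 : ℝ) ≤ 1 + 2 * (j : ℝ) / N := by
      have : (0:ℝ) ≤ 2 * (j : ℝ) / N := by positivity
      linarith
    have hd : (1 : ℝ) ≤ (1 + 2 * ((j : ℝ) - 1) / N) * (1 + 2 * (j : ℝ) / N) := by nlinarith
    simp only [cfCoeff, hj, if_false]
    constructor
    · exact div_nonneg (by positivity) (by linarith)
    · exact div_le_self (by positivity) hd

lemma cfCoeff_tendsto (a η : ℝ) (k : ℕ) :
    Tendsto (fun N : ℕ => cfCoeff a η N k) atTop (nhds (a ^ 2 * η ^ 2)) := by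
  rcases eq_or_ne k 0 with hk | hk
  · simp only [cfCoeff, hk, if_true]
    exact tendsto_const_nhds
  · have hinv : Tendsto (fun N : ℕ => ((N : ℝ))⁻¹) atTop (nhds 0) :=
      tendsto_inv_atTop_zero.comp tendsto_natCast_atTop_atTop
    have h1 : Tendsto (fun N : ℕ => 1 + 2 * ((k : ℝ) - 1) / (N : ℝ)) atTop (nhds 1) := by
      have h := hinv.const_mul (2 * ((k : ℝ) - 1))
      simp only [mul_zero] at h
      have h' := (tendsto_const_nhds : Tendsto (fun _ : ℕ => (1:ℝ)) atTop (nhds 1)).add h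
      simpa [div_eq_mul_inv] using h'
    have h2 : Tendsto (fun N : ℕ => 1 + 2 * (k : ℝ) / (N : ℝ)) atTop (nhds 1) := by
      have h := hinv.const_mul (2 * (k : ℝ))
      simp only [mul_zero] at h
      have h' := (tendsto_const_nhds : Tendsto (fun _ : ℕ => (1:ℝ)) atTop (nhds 1)).add h
      simpa [div_eq_mul_inv] using h'
    have hd : Tendsto
        (fun N : ℕ => (1 + 2 * ((k : ℝ) - 1) / N) * (1 + 2 * (k : ℝ) / N)) atTop (nhds 1) := by
      have := h1.mul h2
      simpa using this
    have h3 := (tendsto_const_nhds :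
        Tendsto (fun _ : ℕ => a ^ 2 * η ^ 2) atTop (nhds (a ^ 2 * η ^ 2))).div hd one_ne_zero
    simp only [div_one] at h3
    simpa [cfCoeff, hk, Pi.div_def] using h3

lemma cfApprox_tendsto (a η : ℝ) (hz0 : 0 ≤ a ^ 2 * η ^ 2) (hz : a ^ 2 * η ^ 2 < 1/4) :
    ∀ ℓ k, Tendsto (fun N : ℕ => cfracApprox (cfCoeff a η N) ℓ k) atTop
      (nhds (cfracApprox (fun _ => a ^ 2 * η ^ 2) ℓ k)) := by
  intro ℓ
  induction ℓ with
  | zero =>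
    intro k
    simp only [cfracApprox]
    exact tendsto_const_nhds
  | succ ℓ ih =>
    intro k
    have hb := cf_bounds hz0 hz (fun j => ⟨hz0, le_refl _⟩) ℓ (k + 1)
    have hne : (1 : ℝ) - cfracApprox (fun _ => a ^ 2 * η ^ 2) ℓ (k + 1) ≠ 0 :=
      ne_of_gt (by linarith [hb.2])
    have h := (cfCoeff_tendsto a η k).div
      ((tendsto_const_nhds : Tendsto (fun _ : ℕ => (1:ℝ)) atTop (nhds 1)).sub (ih (k + 1))) hne
    exact h

lemma cf_const_limit (z : ℝ) (hz0 : 0 < z) (hz4 : 4 * z < 1) :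
    Tendsto (fun ℓ => cfracApprox (fun _ => z) ℓ 0) atTop
      (nhds (2 * z / (1 + Real.sqrt (1 - 4 * z)))) := by
  have hz : z < 1/4 := by linarith
  have hc : ∀ j, 0 ≤ (fun _ : ℕ => z) j ∧ (fun _ : ℕ => z) j ≤ z := fun j => ⟨hz0.le, le_refl _⟩
  set g : ℕ → ℝ := fun ℓ => cfracApprox (fun _ => z) ℓ 0 with hg
  have hmono : Monotone g := monotone_nat_of_le_succ (fun ℓ => cf_mono hz0.le hz hc ℓ 0)
  have hbdd : BddAbove (Set.range g) := by
    refine ⟨2 * z, ?_⟩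
    rintro y ⟨ℓ, rfl⟩
    exact (cf_bounds hz0.le hz hc ℓ 0).2
  set x : ℝ := ⨆ ℓ, g ℓ with hxdef
  have hgten : Tendsto g atTop (nhds x) := tendsto_atTop_ciSup hmono hbdd
  have hxle : x ≤ 2 * z := ciSup_le (fun ℓ => (cf_bounds hz0.le hz hc ℓ 0).2)
  have hx2 : x < 1/2 := by linarith
  have hrec : (fun ℓ => g (ℓ + 1)) = fun ℓ => z / (1 - g ℓ) := by
    funext ℓ
    show z / (1 - cfracApprox (fun _ => z) ℓ 1) = _
    rw [cf_const_shift z ℓ 1]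
  have h1x : Tendsto (fun ℓ => g (ℓ + 1)) atTop (nhds x) :=
    hgten.comp (tendsto_add_atTop_nat 1)
  have hdiv : Tendsto (fun ℓ => z / (1 - g ℓ)) atTop (nhds (z / (1 - x))) :=
    tendsto_const_nhds.div (tendsto_const_nhds.sub hgten) (ne_of_gt (by linarith))
  have hfix : x = z / (1 - x) := tendsto_nhds_unique h1x (hrec ▸ hdiv)
  have hq : x * (1 - x) = z := (eq_div_iff (ne_of_gt (by linarith : (0:ℝ) < 1 - x))).mp hfix
  set s : ℝ := Real.sqrt (1 - 4 * z) with hsdef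
  have hs2 : s ^ 2 = 1 - 4 * z := Real.sq_sqrt (by linarith)
  have hs0 : 0 ≤ s := Real.sqrt_nonneg _
  have hprod : (2 * x - 1 + s) * (2 * x - 1 - s) = 0 := by linear_combination (-4) * hq - hs2
  have hxe : 2 * x - 1 + s = 0 := by
    rcases mul_eq_zero.mp hprod with h | h
    · exact h
    · exfalso; linarith
  have hLx : 2 * z / (1 + s) = x := by
    rw [div_eq_iff (ne_of_gt (by linarith : (0:ℝ) < 1 + s))]
    linear_combination (-(1 + s) / 2) * hxe + (1 / 2) * hs2
  rw [hLx]
  exact hgten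

/-- For `0 < 2a|η| < 1`, the continued fraction with numerators `c_j = a²η²/((1+2(j−1)/N)(1+2j/N))`
converges for each `N`, its value tends as `N → ∞` to the value of the continued fraction with
all partial numerators `a²η²`, which equals `2a²η²/(1+√(1−4a²η²))`. -/
theorem cfrac_limit_largeN (a η : ℝ) (ha : 0 < a) (hη : 0 < 2 * a * |η|)
    (hη' : 2 * a * |η| < 1) :
    ∃ v : ℕ → ℝ,
      (∀ N : ℕ, 1 ≤ N →
        Tendsto (fun ℓ => cfracApprox (cfCoeff a η N) ℓ 0) atTop (nhds (v N))) ∧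
      Tendsto (fun ℓ => cfracApprox (fun _ => a ^ 2 * η ^ 2) ℓ 0) atTop
        (nhds (2 * a ^ 2 * η ^ 2 / (1 + Real.sqrt (1 - 4 * a ^ 2 * η ^ 2)))) ∧
      Tendsto v atTop
        (nhds (2 * a ^ 2 * η ^ 2 / (1 + Real.sqrt (1 - 4 * a ^ 2 * η ^ 2)))) := by
  have hη0 : η ≠ 0 := by
    intro h
    rw [h] at hη
    simp at hη
  have hz0 : (0:ℝ) < a ^ 2 * η ^ 2 := by positivity
  have key : (2 * a * |η|) ^ 2 = 4 * (a ^ 2 * η ^ 2) := by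
    rw [mul_pow, mul_pow, sq_abs]; ring
  have hz4 : 4 * (a ^ 2 * η ^ 2) < 1 := by nlinarith [key, hη, hη']
  have hz : a ^ 2 * η ^ 2 < 1/4 := by linarith
  have hcb : ∀ N, ∀ j, 0 ≤ cfCoeff a η N j ∧ cfCoeff a η N j ≤ a ^ 2 * η ^ 2 :=
    fun N => cfCoeff_bounds a η N
  set v : ℕ → ℝ := fun N => ⨆ ℓ, cfracApprox (cfCoeff a η N) ℓ 0 with hv
  have hvbdd : ∀ N, BddAbove (Set.range fun ℓ => cfracApprox (cfCoeff a η N) ℓ 0) := by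
    intro N
    refine ⟨2 * (a ^ 2 * η ^ 2), ?_⟩
    rintro y ⟨ℓ, rfl⟩
    exact (cf_bounds hz0.le hz (hcb N) ℓ 0).2
  have hvten : ∀ N, Tendsto (fun ℓ => cfracApprox (cfCoeff a η N) ℓ 0) atTop (nhds (v N)) :=
    fun N => tendsto_atTop_ciSup
      (monotone_nat_of_le_succ fun ℓ => cf_mono hz0.le hz (hcb N) ℓ 0) (hvbdd N)
  have hgL := cf_const_limit (a ^ 2 * η ^ 2) hz0 hz4
  have hLeq : 2 * (a ^ 2 * η ^ 2) / (1 + Real.sqrt (1 - 4 * (a ^ 2 * η ^ 2)))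
      = 2 * a ^ 2 * η ^ 2 / (1 + Real.sqrt (1 - 4 * a ^ 2 * η ^ 2)) := by
    rw [show 1 - 4 * (a ^ 2 * η ^ 2) = 1 - 4 * a ^ 2 * η ^ 2 by ring]
    ring
  rw [hLeq] at hgL
  refine ⟨v, fun N _ => hvten N, hgL, ?_⟩
  set L := 2 * a ^ 2 * η ^ 2 / (1 + Real.sqrt (1 - 4 * a ^ 2 * η ^ 2)) with hL
  rw [Metric.tendsto_atTop]
  intro ε hε
  have hBten : Tendsto
      (fun ℓ : ℕ => a ^ 2 * η ^ 2 * (4 * (a ^ 2 * η ^ 2)) ^ ℓ / (1 - 4 * (a ^ 2 * η ^ 2)))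
      atTop (nhds 0) := by
    have hp : Tendsto (fun ℓ : ℕ => (4 * (a ^ 2 * η ^ 2)) ^ ℓ) atTop (nhds 0) :=
      tendsto_pow_atTop_nhds_zero_of_lt_one (by positivity) (by linarith)
    have h := (hp.const_mul (a ^ 2 * η ^ 2)).div_const (1 - 4 * (a ^ 2 * η ^ 2))
    simpa using h
  have hev1 : ∀ᶠ ℓ : ℕ in atTop,
      a ^ 2 * η ^ 2 * (4 * (a ^ 2 * η ^ 2)) ^ ℓ / (1 - 4 * (a ^ 2 * η ^ 2)) < ε / 3 :=
    hBten.eventually (gt_mem_nhds (by linarith))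
  have hev2 : ∀ᶠ ℓ : ℕ in atTop, dist (cfracApprox (fun _ => a ^ 2 * η ^ 2) ℓ 0) L < ε / 3 :=
    (Metric.tendsto_nhds.mp hgL) (ε / 3) (by linarith)
  obtain ⟨ℓ, h1, h2⟩ := (hev1.and hev2).exists
  have h3 := cfApprox_tendsto a η hz0.le hz ℓ 0
  rw [Metric.tendsto_atTop] at h3
  obtain ⟨N₀, hN₀⟩ := h3 (ε / 3) (by linarith)
  refine ⟨N₀, fun N hN => ?_⟩
  have hfa := hN₀ N hN
  have hle : cfracApprox (cfCoeff a η N) ℓ 0 ≤ v N := le_ciSup (hvbdd N) ℓ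
  have hub : v N ≤ cfracApprox (cfCoeff a η N) ℓ 0
      + a ^ 2 * η ^ 2 * (4 * (a ^ 2 * η ^ 2)) ^ ℓ / (1 - 4 * (a ^ 2 * η ^ 2)) := by
    refine le_of_tendsto (hvten N) ?_
    rw [eventually_atTop]
    refine ⟨ℓ, fun m hm => ?_⟩
    obtain ⟨n, rfl⟩ := Nat.exists_eq_add_of_le hm
    linarith [cf_tail hz0.le hz (hcb N) ℓ n 0]
  rw [Real.dist_eq] at hfa h2 ⊢
  rw [abs_lt] at hfa h2 ⊢
  have hBnn : 0 ≤ a ^ 2 * η ^ 2 * (4 * (a ^ 2 * η ^ 2)) ^ ℓ / (1 - 4 * (a ^ 2 * η ^ 2)) :=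
    div_nonneg (by positivity) (by linarith)
  constructor <;> linarith [h1, hle, hub, hfa.1, hfa.2, h2.1, h2.2, hBnn]
end

section
/- Define w₀(p) = 1/(2p) − α²/(4p²), and recursively w_n(p) = (1/(2p²))·(p − 1/(p⁻¹+ω−1) + (4ω/(p⁻¹+ω−1)²)·w_{n−1}(ω/(p⁻¹+ω−1))). Then for all n ≥ 1 and p > 0, w_n(p) = (1/(2p²))·(p + (1/2)Σ_{j=1}^n 2^j/(ω^j − 1 + p⁻¹) − (1/2)(2/ω)^n α²). -/
open Finset

/-- Closed form for the recursion `w₀(p) = 1/(2p) − α²/(4p²)`,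
`w_n(p) = (1/(2p²))(p − 1/(p⁻¹+ω−1) + (4ω/(p⁻¹+ω−1)²)w_{n−1}(ω/(p⁻¹+ω−1)))`:
for `n ≥ 1`, `w_n(p) = (1/(2p²))(p + (1/2)Σ_{j=1}^n 2^j/(ω^j−1+p⁻¹) − (1/2)(2/ω)^n α²)`. -/
theorem wn_closed_form (α ω : ℝ) (hα : 0 < α) (hω : 1 < ω)
    (w : ℕ → ℝ → ℝ)
    (h0 : ∀ p : ℝ, w 0 p = 1 / (2 * p) - α ^ 2 / (4 * p ^ 2))
    (hrec : ∀ (n : ℕ) (p : ℝ), w (n + 1) p =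
      (1 / (2 * p ^ 2)) * (p - 1 / (p⁻¹ + ω - 1)
        + (4 * ω / (p⁻¹ + ω - 1) ^ 2) * w n (ω / (p⁻¹ + ω - 1)))) :
    ∀ n : ℕ, 1 ≤ n → ∀ p : ℝ, 0 < p →
      w n p = (1 / (2 * p ^ 2)) *
        (p + (1 / 2) * ∑ j ∈ Icc 1 n, 2 ^ j / (ω ^ j - 1 + p⁻¹)
          - (1 / 2) * (2 / ω) ^ n * α ^ 2) := by
  intro n hn
  induction n, hn using Nat.le_induction with
  | base =>
    intro p hp
    have hp' : p ≠ 0 := hp.ne'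
    have hω0 : (0:ℝ) < ω := lt_trans one_pos hω
    have hD : 0 < p⁻¹ + ω - 1 := by
      have := inv_pos.mpr hp; linarith
    rw [hrec, h0]
    simp only [Finset.Icc_self, Finset.sum_singleton, pow_one]
    have e2 : ω - 1 + p⁻¹ = p⁻¹ + ω - 1 := by ring
    rw [e2]
    set D := p⁻¹ + ω - 1 with hD2
    field_simp
    ring
  | succ n hn ih =>
    intro p hp
    have hp' : p ≠ 0 := hp.ne'
    have hω0 : (0:ℝ) < ω := lt_trans one_pos hω
    have hpi : 0 < p⁻¹ := inv_pos.mpr hp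
    have hD : 0 < p⁻¹ + ω - 1 := by linarith
    have hq : 0 < ω / (p⁻¹ + ω - 1) := div_pos hω0 hD
    have hX : ∀ j : ℕ, 0 < ω ^ j - 1 + p⁻¹ := by
      intro j
      have h1 : (1:ℝ) ≤ ω ^ j := one_le_pow₀ hω.le
      linarith
    rw [hrec, ih _ hq]
    have hqinv : (ω / (p⁻¹ + ω - 1))⁻¹ = (p⁻¹ + ω - 1) / ω := by rw [inv_div]
    have hsum : ∑ j ∈ Icc 1 n, (2:ℝ) ^ j / (ω ^ j - 1 + (ω / (p⁻¹ + ω - 1))⁻¹)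
        = (ω / 2) * ∑ j ∈ Icc 2 (n + 1), (2:ℝ) ^ j / (ω ^ j - 1 + p⁻¹) := by
      have hmap : Icc 2 (n + 1) = (Icc 1 n).map (addRightEmbedding 1) := by
        rw [Finset.map_add_right_Icc]
      rw [hmap, Finset.sum_map, Finset.mul_sum]
      apply Finset.sum_congr rfl
      intro j _
      simp only [addRightEmbedding_apply]
      rw [hqinv]
      have e1 : ω ^ j - 1 + (p⁻¹ + ω - 1) / ω = (ω ^ (j + 1) - 1 + p⁻¹) / ω := by
        rw [pow_succ]; field_simp; ring
      rw [e1, div_div_eq_mul_div, pow_succ]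
      ring
    rw [hsum]
    have hsplit : ∑ j ∈ Icc 1 (n + 1), (2:ℝ) ^ j / (ω ^ j - 1 + p⁻¹)
        = 2 / (ω - 1 + p⁻¹) + ∑ j ∈ Icc 2 (n + 1), (2:ℝ) ^ j / (ω ^ j - 1 + p⁻¹) := by
      have hins : Icc 1 (n + 1) = insert 1 (Icc 2 (n + 1)) := by
        ext x; simp only [Finset.mem_Icc, Finset.mem_insert]; omega
      rw [hins, Finset.sum_insert (by simp)]
      norm_num
    rw [hsplit]
    have e2 : ω - 1 + p⁻¹ = p⁻¹ + ω - 1 := by ring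
    rw [e2, pow_succ]
    set S := ∑ j ∈ Icc 2 (n + 1), (2:ℝ) ^ j / (ω ^ j - 1 + p⁻¹) with hS
    set D := p⁻¹ + ω - 1 with hD2
    field_simp
    have hωi : ω * ω⁻¹ = 1 := mul_inv_cancel₀ hω0.ne'
    linear_combination (D * ω⁻¹ ^ n * α ^ 2 * 2 ^ n * 8) * hωi
end
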